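/- Let H be a real inner product space, (x^k)_{k≥0} a sequence in H, (t_k)_{k≥0} nonnegative real numbers, and (u^k)_{k≥0} a sequence in H with ‖u^k‖ = 1 for all k, such that x^i − x^{i−1} = t_{i−1} u^{i−1} for all i ≥ 1. Then for all integers 1 ≤ k ≤ l, Σ_{i=k}^{l} t_{i−1} ≤ ‖x^l − x^{k−1}‖ + Σ_{i=k}^{l} t_{i−1}‖u^{i−1} − u^{k−1}‖. -/

import Mathlib

lemma telescope_aux {H : Type*} [NormedAddCommGroup H]
    [InnerProductSpace ℝ H]
    (x : ℕ → H) (t : ℕ → ℝ) (u : ℕ → H)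
    (hstep : ∀ i : ℕ, x (i + 1) - x i = t i • u i)
    (m n : ℕ) (hmn : m ≤ n) :
    x n - x m = ∑ j ∈ Finset.Ico m n, t j • u j := by
  induction n, hmn using Nat.le_induction with
  | base => simp
  | succ n hn ih =>
    rw [Finset.sum_Ico_succ_top (by omega), ← ih, ← hstep n]
    abel

/-- Telescoping estimate (17) in the proof of Theorem 4.1: if `xⁱ − xⁱ⁻¹ = tᵢ₋₁ uⁱ⁻¹`
with `tᵢ ≥ 0` and unit vectors `uⁱ`, then for `1 ≤ k ≤ l`,
`Σ_{i=k}^{l} t_{i−1} ≤ ‖x^l − x^{k−1}‖ + Σ_{i=k}^{l} t_{i−1} ‖u^{i−1} − u^{k−1}‖`. -/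
theorem telescoping_step_estimate {H : Type*} [NormedAddCommGroup H]
    [InnerProductSpace ℝ H]
    (x : ℕ → H) (t : ℕ → ℝ) (u : ℕ → H)
    (ht : ∀ k, 0 ≤ t k) (hu : ∀ k, ‖u k‖ = 1)
    (hstep : ∀ i : ℕ, x (i + 1) - x i = t i • u i)
    (k l : ℕ) (hk : 1 ≤ k) (hkl : k ≤ l) :
    ∑ i ∈ Finset.Icc k l, t (i - 1) ≤
      ‖x l - x (k - 1)‖ + ∑ i ∈ Finset.Icc k l, t (i - 1) * ‖u (i - 1) - u (k - 1)‖ := by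
  -- reindex sums over Icc k l with i-1 to Ico (k-1) l
  have hre : ∀ f : ℕ → ℝ, ∑ i ∈ Finset.Icc k l, f (i - 1) = ∑ j ∈ Finset.Ico (k-1) l, f j := by
    intro f
    have : Finset.Icc k l = Finset.map ⟨fun j => j + 1, (show Function.Injective (fun j : ℕ => j + 1) from fun a b h => by simpa using h)⟩ (Finset.Ico (k-1) l) := by
      ext i
      simp only [Finset.mem_map, Finset.mem_Ico, Finset.mem_Icc, Function.Embedding.coeFn_mk]
      constructor
      · intro hi; exact ⟨i - 1, by omega, by omega⟩
      · rintro ⟨j, hj, rfl⟩; omega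
    rw [this, Finset.sum_map]
    simp
  rw [hre, hre (fun j => t j * ‖u j - u (k - 1)‖)]
  set m := k - 1 with hm
  have hml : m ≤ l := by omega
  have key := telescope_aux x t u hstep m l hml
  set S := ∑ j ∈ Finset.Ico m l, t j with hS
  have hsplit : x l - x m = (∑ j ∈ Finset.Ico m l, t j • (u j - u m)) + S • u m := by
    rw [key, hS, Finset.sum_smul]
    rw [← Finset.sum_add_distrib]
    apply Finset.sum_congr rfl
    intro j _
    rw [smul_sub]; abel
  have hSnorm : ‖S • u m‖ = S := by
    rw [norm_smul, hu m, mul_one, Real.norm_eq_abs, abs_of_nonneg]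
    exact Finset.sum_nonneg fun j _ => ht j
  calc S = ‖S • u m‖ := hSnorm.symm
    _ = ‖(x l - x m) - ∑ j ∈ Finset.Ico m l, t j • (u j - u m)‖ := by
        rw [hsplit]; congr 1; abel
    _ ≤ ‖x l - x m‖ + ‖∑ j ∈ Finset.Ico m l, t j • (u j - u m)‖ := norm_sub_le _ _
    _ ≤ ‖x l - x m‖ + ∑ j ∈ Finset.Ico m l, t j * ‖u j - u m‖ := by
        gcongr
        refine (norm_sum_le _ _).trans ?_
        apply Finset.sum_le_sum
        intro j _
        rw [norm_smul, Real.norm_eq_abs, abs_of_nonneg (ht j)]
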